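/- Let μ_M be a stable matching such that for every stable matching μ and every man m, either μ_M(m) = μ(m) or μ_M(m) ≻_m μ(m). Then μ_M is simultaneously worst for all women: for every stable matching μ and every woman w, either μ⁻¹(w) = μ_M⁻¹(w) or μ⁻¹(w) ≻_w μ_M⁻¹(w). -/

import Mathlib

/-- A stable marriage instance: finite sets `M` of men and `W` of women of equal
positive cardinality, with strict total preference orders for each agent. -/
structure SMInstance (M W : Type) [Fintype M] [Fintype W] where
  card_eq : Fintype.card M = Fintype.card W
  card_pos : 1 ≤ Fintype.card M
  prefM : M → W → W → Prop
  prefW : W → M → M → Prop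
  prefM_sto : ∀ m, IsStrictTotalOrder W (prefM m)
  prefW_sto : ∀ w, IsStrictTotalOrder M (prefW w)

/-- A pair `(m, w)` blocks the matching `μ` if `w ≻_m μ(m)` and `m ≻_w μ⁻¹(w)`. -/
def SMInstance.Blocks {M W : Type} [Fintype M] [Fintype W]
    (I : SMInstance M W) (μ : M ≃ W) (m : M) (w : W) : Prop :=
  I.prefM m w (μ m) ∧ I.prefW w m (μ.symm w)

/-- A matching is stable if no pair blocks it. -/
def SMInstance.Stable {M W : Type} [Fintype M] [Fintype W]
    (I : SMInstance M W) (μ : M ≃ W) : Prop :=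
  ∀ m w, ¬ I.Blocks μ m w

/-- If `μM` is a stable matching that is simultaneously best for all men, then it is
simultaneously worst for all women. -/
theorem man_optimal_is_woman_pessimal {M W : Type} [Fintype M] [Fintype W]
    (I : SMInstance M W) (μM : M ≃ W) (hμM : I.Stable μM)
    (hopt : ∀ μ : M ≃ W, I.Stable μ → ∀ m : M, μM m = μ m ∨ I.prefM m (μM m) (μ m)) :
    ∀ μ : M ≃ W, I.Stable μ → ∀ w : W,
      μ.symm w = μM.symm w ∨ I.prefW w (μ.symm w) (μM.symm w) := by
  intro μ hμ w
  set m := μM.symm w with hm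
  by_cases heq : μ.symm w = m
  · exact Or.inl heq
  · right
    have hw : μM m = w := μM.apply_symm_apply w
    have hne : μ m ≠ w := by
      intro h
      exact heq (by rw [← h, Equiv.symm_apply_apply])
    have hpm : I.prefM m w (μ m) := by
      rcases hopt μ hμ m with h | h
      · exact absurd (hw ▸ h.symm) hne
      · rwa [hw] at h
    have hnb := hμ m w
    unfold SMInstance.Blocks at hnb
    push_neg at hnb
    have hnw : ¬ I.prefW w m (μ.symm w) := hnb hpm
    rcases (show I.prefW w (μ.symm w) m ∨ μ.symm w = m ∨ I.prefW w m (μ.symm w) by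
      have := (I.prefW_sto w).trichotomous (μ.symm w) m; tauto) with h | h | h
    · exact h
    · exact absurd h heq
    · exact absurd h hnw
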